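/- For every probability mass function ν = (ν_1, ν_2, …) on the positive integers there exists x ∈ [0, 1/e) such that Σ_{n≥1} ν_n p_n(x) > Σ_{n≥1} ν_n p_n(1/e). In other words, against every prior distribution ν for the number of items, some x-strategy with x < 1/e strictly outperforms the 1/e-strategy, so the 1/e-strategy is never ν-optimal. -/

import Mathlib

open Finset Real

/-- `p_n(x) = 1 - x - Σ_{k=2}^{n} (1-x)^k/(k(k-1))`, the winning probability of the
`x`-strategy with `n` items. -/
noncomputable def pwin (n : ℕ) (x : ℝ) : ℝ :=
  1 - x - ∑ k ∈ Finset.Icc 2 n, (1 - x) ^ k / ((k : ℝ) * ((k : ℝ) - 1))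

lemma my_pow_sub_pow_le {a b : ℝ} (hb : 0 ≤ b) (hba : b ≤ a) (k : ℕ) :
    a ^ k - b ^ k ≤ k * (a - b) * a ^ (k - 1) := by
  have ha : 0 ≤ a := hb.trans hba
  rcases k with _ | k
  · simp
  have hgeom := geom_sum₂_mul a b (k + 1)
  have hsum : (∑ i ∈ range (k + 1), a ^ i * b ^ (k + 1 - 1 - i)) ≤ (k + 1) * a ^ k := by
    calc (∑ i ∈ range (k + 1), a ^ i * b ^ (k + 1 - 1 - i))
        ≤ ∑ i ∈ range (k + 1), a ^ k := by
          apply Finset.sum_le_sum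
          intro i hi
          have hik : i ≤ k := Nat.lt_succ_iff.mp (Finset.mem_range.mp hi)
          have h1 : b ^ (k + 1 - 1 - i) ≤ a ^ (k + 1 - 1 - i) :=
            pow_le_pow_left₀ hb hba _
          calc a ^ i * b ^ (k + 1 - 1 - i) ≤ a ^ i * a ^ (k + 1 - 1 - i) := by
                exact mul_le_mul_of_nonneg_left h1 (pow_nonneg ha i)
            _ = a ^ k := by
                rw [← pow_add]
                congr 1
                omega
      _ = (k + 1) * a ^ k := by
          rw [Finset.sum_const, Finset.card_range, nsmul_eq_mul]
          push_cast; ring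
  have hab : 0 ≤ a - b := sub_nonneg.mpr hba
  calc a ^ (k + 1) - b ^ (k + 1)
      = (∑ i ∈ range (k + 1), a ^ i * b ^ (k + 1 - 1 - i)) * (a - b) := hgeom.symm
    _ ≤ ((k + 1) * a ^ k) * (a - b) := mul_le_mul_of_nonneg_right hsum hab
    _ = (k + 1 : ℕ) * (a - b) * a ^ (k + 1 - 1) := by push_cast; ring

lemma pwin_diff {x y : ℝ} (hx : 0 ≤ x) (hxy : x ≤ y) (hy : y ≤ 1) (n : ℕ) :
    (y - x) * (1 - ∑ j ∈ Finset.Icc 1 n, (1 - x) ^ j / (j : ℝ)) ≤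
      pwin (n + 1) x - pwin (n + 1) y := by
  have hsub : (∑ k ∈ Finset.Icc 2 (n + 1), (1 - x) ^ k / ((k : ℝ) * ((k : ℝ) - 1))) -
      (∑ k ∈ Finset.Icc 2 (n + 1), (1 - y) ^ k / ((k : ℝ) * ((k : ℝ) - 1))) =
      ∑ k ∈ Finset.Icc 2 (n + 1), ((1 - x) ^ k - (1 - y) ^ k) / ((k : ℝ) * ((k : ℝ) - 1)) := by
    rw [← Finset.sum_sub_distrib]
    exact Finset.sum_congr rfl fun k _ => div_sub_div_same _ _ _
  have key : ∑ k ∈ Finset.Icc 2 (n + 1), ((1 - x) ^ k - (1 - y) ^ k) / ((k : ℝ) * ((k : ℝ) - 1))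
      ≤ (y - x) * ∑ j ∈ Finset.Icc 1 n, (1 - x) ^ j / (j : ℝ) := by
    rw [Finset.mul_sum]
    rw [← Finset.Ico_add_one_right_eq_Icc, Finset.sum_Ico_eq_sum_range]
    rw [show (∑ j ∈ Finset.Icc 1 n, (y - x) * ((1 - x) ^ j / (j : ℝ)))
        = ∑ i ∈ Finset.range n, (y - x) * ((1 - x) ^ (1 + i) / ((1 + i : ℕ) : ℝ)) by
      rw [← Finset.Ico_add_one_right_eq_Icc, Finset.sum_Ico_eq_sum_range]
      simp]
    have hrange : n + 1 + 1 - 2 = n := by omega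
    rw [hrange]
    apply Finset.sum_le_sum
    intro i _
    have ha1 : (1 : ℝ) - x ≤ 1 := by linarith
    have hb0 : (0 : ℝ) ≤ 1 - y := by linarith
    have hba : (1 : ℝ) - y ≤ 1 - x := by linarith
    have hp := my_pow_sub_pow_le hb0 hba (2 + i)
    have hexp : 2 + i - 1 = 1 + i := by omega
    rw [hexp] at hp
    have hD : (0 : ℝ) < ((2 + i : ℕ) : ℝ) * (((2 + i : ℕ) : ℝ) - 1) := by
      push_cast
      nlinarith [Nat.cast_nonneg (α := ℝ) i]
    rw [div_le_iff₀ hD]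
    have he : (y - x) * ((1 - x) ^ (1 + i) / ((1 + i : ℕ) : ℝ)) *
        (((2 + i : ℕ) : ℝ) * (((2 + i : ℕ) : ℝ) - 1)) =
        ((2 + i : ℕ) : ℝ) * ((1 - x) - (1 - y)) * (1 - x) ^ (1 + i) := by
      have h1i : ((1 + i : ℕ) : ℝ) ≠ 0 := by positivity
      field_simp
      push_cast
      ring
    rw [he]
    exact hp
  unfold pwin
  have expand : (y - x) * (1 - ∑ j ∈ Finset.Icc 1 n, (1 - x) ^ j / (j : ℝ)) =
      (y - x) - (y - x) * ∑ j ∈ Finset.Icc 1 n, (1 - x) ^ j / (j : ℝ) := by ring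
  linarith [key, hsub, expand]

lemma sum_pow_div_le_neg_log {x : ℝ} (hx0 : 0 < x) (hx1 : x ≤ 1) (n : ℕ) :
    ∑ j ∈ Finset.Icc 1 n, (1 - x) ^ j / (j : ℝ) ≤ -Real.log x := by
  have ht : |1 - x| < 1 := by rw [abs_lt]; constructor <;> linarith
  have hs : HasSum (fun k : ℕ => (1 - x) ^ (k + 1) / ((k : ℝ) + 1)) (-Real.log x) := by
    have := Real.hasSum_pow_div_log_of_abs_lt_one ht
    simpa using this
  rw [← Finset.Ico_add_one_right_eq_Icc, Finset.sum_Ico_eq_sum_range]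
  have heq : ∀ i : ℕ, (1 - x) ^ (1 + i) / ((1 + i : ℕ) : ℝ) =
      (1 - x) ^ (i + 1) / ((i : ℝ) + 1) := by
    intro i; rw [add_comm 1 i]; push_cast; ring_nf
  calc ∑ i ∈ Finset.range (n + 1 - 1), (1 - x) ^ (1 + i) / ((1 + i : ℕ) : ℝ)
      = ∑ i ∈ Finset.range (n + 1 - 1), (1 - x) ^ (i + 1) / ((i : ℝ) + 1) := by
        exact Finset.sum_congr rfl fun i _ => heq i
    _ ≤ -Real.log x := by
        apply sum_le_hasSum _ _ hs
        intro i _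
        have h1x : (0 : ℝ) ≤ 1 - x := by linarith
        positivity

lemma sum_inv_eq (n : ℕ) (hn : 1 ≤ n) :
    ∑ k ∈ Finset.Icc 2 n, (1 : ℝ) / ((k : ℝ) * ((k : ℝ) - 1)) = 1 - 1 / n := by
  induction n with
  | zero => omega
  | succ m ih =>
    rcases Nat.eq_or_lt_of_le hn with h | h
    · simp [← h]
    · have hm : 1 ≤ m := by omega
      rw [Finset.sum_Icc_succ_top (by omega : 2 ≤ m + 1), ih hm]
      have hm0 : (m : ℝ) ≠ 0 := by positivity
      have hm1 : ((m : ℝ) + 1) ≠ 0 := by positivity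
      have hcast : ((m + 1 : ℕ) : ℝ) = (m : ℝ) + 1 := by push_cast; ring
      rw [hcast]
      have : ((m : ℝ) + 1) - 1 = (m : ℝ) := by ring
      rw [this]
      field_simp
      ring

lemma pwin_abs_le {x : ℝ} (hx0 : 0 ≤ x) (hx1 : x ≤ 1) (n : ℕ) : |pwin n x| ≤ 2 := by
  unfold pwin
  have h1x0 : (0 : ℝ) ≤ 1 - x := by linarith
  have h1x1 : (1 : ℝ) - x ≤ 1 := by linarith
  have hS0 : 0 ≤ ∑ k ∈ Finset.Icc 2 n, (1 - x) ^ k / ((k : ℝ) * ((k : ℝ) - 1)) := by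
    apply Finset.sum_nonneg
    intro k hk
    have hk2 : 2 ≤ k := (Finset.mem_Icc.mp hk).1
    have : (1 : ℝ) ≤ (k : ℝ) - 1 := by
      have : (2 : ℝ) ≤ (k : ℝ) := by exact_mod_cast hk2
      linarith
    have hk0 : (0 : ℝ) < (k : ℝ) := by positivity
    have hden : (0 : ℝ) < (k : ℝ) * ((k : ℝ) - 1) := by nlinarith
    positivity
  have hS1 : ∑ k ∈ Finset.Icc 2 n, (1 - x) ^ k / ((k : ℝ) * ((k : ℝ) - 1)) ≤ 1 := by
    rcases Nat.lt_or_ge n 2 with h | h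
    · rw [Finset.Icc_eq_empty (by omega)]
      simp
    · have hle : ∑ k ∈ Finset.Icc 2 n, (1 - x) ^ k / ((k : ℝ) * ((k : ℝ) - 1)) ≤
          ∑ k ∈ Finset.Icc 2 n, (1 : ℝ) / ((k : ℝ) * ((k : ℝ) - 1)) := by
        apply Finset.sum_le_sum
        intro k hk
        have hk2 : 2 ≤ k := (Finset.mem_Icc.mp hk).1
        have h2k : (2 : ℝ) ≤ (k : ℝ) := by exact_mod_cast hk2
        have hden : (0 : ℝ) < (k : ℝ) * ((k : ℝ) - 1) := by nlinarith
        apply div_le_div_of_nonneg_right ?_ hden.le |>.trans_eq rfl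
        case _ => exact pow_le_one₀ h1x0 h1x1
      have := sum_inv_eq n (by omega)
      have hn0 : (0 : ℝ) < (n : ℝ) := by
        have : 0 < n := by omega
        exact_mod_cast this
      have : ∑ k ∈ Finset.Icc 2 n, (1 : ℝ) / ((k : ℝ) * ((k : ℝ) - 1)) ≤ 1 := by
        rw [sum_inv_eq n (by omega)]
        have : 0 ≤ 1 / (n : ℝ) := by positivity
        linarith
      linarith
  rw [abs_le]
  constructor <;> linarith

lemma summable_nu_pwin {ν : ℕ → ℝ} (hν0 : ∀ n, 0 ≤ ν n) (hν : Summable ν)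
    {x : ℝ} (hx0 : 0 ≤ x) (hx1 : x ≤ 1) :
    Summable (fun n => ν n * pwin (n + 1) x) := by
  apply Summable.of_norm_bounded (g := fun n => 2 * ν n) (hν.mul_left 2)
  intro n
  rw [Real.norm_eq_abs, abs_mul, abs_of_nonneg (hν0 n)]
  calc ν n * |pwin (n + 1) x| ≤ ν n * 2 :=
        mul_le_mul_of_nonneg_left (pwin_abs_le hx0 hx1 (n + 1)) (hν0 n)
    _ = 2 * ν n := by ring


lemma summable_mul_ite (ν : ℕ → ℝ) (hν0 : ∀ n, 0 ≤ ν n) (hν : Summable ν) (M : ℕ) (A B : ℝ) :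
    Summable (fun n => ν n * (if n < M then A else B)) := by
  apply Summable.of_norm_bounded (g := fun n => ν n * max |A| |B|) (hν.mul_right _)
  intro n
  simp only [Real.norm_eq_abs, abs_mul, abs_of_nonneg (hν0 n)]
  apply mul_le_mul_of_nonneg_left _ (hν0 n)
  split_ifs
  · exact le_max_left _ _
  · exact le_max_right _ _

lemma tsum_mul_ite (ν : ℕ → ℝ) (hν0 : ∀ n, 0 ≤ ν n) (hν1 : HasSum ν 1) (M : ℕ) (A B : ℝ) :
    (∑' n : ℕ, ν n * (if n < M then A else B)) =
      (∑ i ∈ Finset.range M, ν i) * A + (1 - ∑ i ∈ Finset.range M, ν i) * B := by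
  have hG := summable_mul_ite ν hν0 hν1.summable M A B
  have hsplit := Summable.sum_add_tsum_nat_add (f := fun n => ν n * (if n < M then A else B)) M hG
  have htail0 := Summable.sum_add_tsum_nat_add (f := ν) M hν1.summable
  rw [hν1.tsum_eq] at htail0
  have h1 : (∑ i ∈ Finset.range M, ν i * (if i < M then A else B)) =
      (∑ i ∈ Finset.range M, ν i) * A := by
    rw [Finset.sum_mul]
    exact Finset.sum_congr rfl fun i hi => by rw [if_pos (Finset.mem_range.mp hi)]
  have hs : Summable (fun i : ℕ => ν (i + M)) :=
    (summable_nat_add_iff (f := ν) M).mpr hν1.summable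
  have h2 : (∑' i : ℕ, ν (i + M) * (if i + M < M then A else B)) =
      (∑' i : ℕ, ν (i + M)) * B := by
    rw [show (fun i : ℕ => ν (i + M) * (if i + M < M then A else B))
        = fun i : ℕ => ν (i + M) * B from funext fun i => by rw [if_neg (by omega)]]
    exact Summable.tsum_mul_right B hs
  have h3 : (∑' i : ℕ, ν (i + M)) = 1 - ∑ i ∈ Finset.range M, ν i := by linarith
  rw [← hsplit, h1, h2, h3]

set_option maxHeartbeats 1000000 in
/-- Against every prior `ν` on the positive integers (here `ν n` is the probability of
`n+1` items), some `x`-strategy with `x < 1/e` strictly outperforms the `1/e`-strategy. -/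
theorem stmt10 (ν : ℕ → ℝ) (hν0 : ∀ n, 0 ≤ ν n) (hν1 : HasSum ν 1) :
    ∃ x : ℝ, 0 ≤ x ∧ x < (Real.exp 1)⁻¹ ∧
      (∑' n : ℕ, ν n * pwin (n + 1) (Real.exp 1)⁻¹) < ∑' n : ℕ, ν n * pwin (n + 1) x := by
  set c : ℝ := (Real.exp 1)⁻¹ with hc_def
  have hc0 : 0 < c := inv_pos.mpr (Real.exp_pos 1)
  have hexp1 : 1 < Real.exp 1 := by nlinarith [Real.add_one_le_exp 1]
  have hc1 : c < 1 := by
    rw [hc_def]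
    exact inv_lt_one_of_one_lt₀ hexp1
  have hlogc : Real.log c = -1 := by
    rw [hc_def, Real.log_inv, Real.log_exp]
  -- choose M with partial mass > 1/2
  obtain ⟨M, hM⟩ : ∃ M, 1 / 2 < ∑ n ∈ Finset.range M, ν n :=
    (hν1.tendsto_sum_nat.eventually (eventually_gt_nhds (by norm_num : (1:ℝ)/2 < 1))).exists
  set m : ℝ := ∑ n ∈ Finset.range M, ν n with hm_def
  have hm_pos : 0 < m := by linarith
  have hm_le : m ≤ 1 := sum_le_hasSum (Finset.range M) (fun i _ => hν0 i) hν1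
  set g : ℝ → ℝ := fun x => 1 - ∑ j ∈ Finset.Icc 1 M, (1 - x) ^ j / (j : ℝ) with hg_def
  have hgc : 0 < g c := by
    have h1 : ∑ j ∈ Finset.Icc 1 (M + 1), (1 - c) ^ j / (j : ℝ) ≤ 1 := by
      have := sum_pow_div_le_neg_log hc0 hc1.le (M + 1)
      rw [hlogc] at this
      linarith
    have h2 : ∑ j ∈ Finset.Icc 1 (M + 1), (1 - c) ^ j / (j : ℝ) =
        (∑ j ∈ Finset.Icc 1 M, (1 - c) ^ j / (j : ℝ)) +
          (1 - c) ^ (M + 1) / ((M + 1 : ℕ) : ℝ) :=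
      Finset.sum_Icc_succ_top (by omega) _
    have h3 : 0 < (1 - c) ^ (M + 1) / ((M + 1 : ℕ) : ℝ) := by
      have : (0 : ℝ) < 1 - c := by linarith
      positivity
    rw [hg_def]
    simp only
    linarith
  -- find x < c with 0 < m * g x + (1 + log x) and 0 < x
  have hcontg : ContinuousAt g c := by
    apply Continuous.continuousAt
    rw [hg_def]
    exact continuous_const.sub (continuous_finset_sum _ fun j _ =>
      ((continuous_const.sub continuous_id).pow j).div_const _)
  have hcont : ContinuousAt (fun x => m * g x + (1 + Real.log x)) c :=
    (continuousAt_const.mul hcontg).add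
      (continuousAt_const.add (Real.continuousAt_log hc0.ne'))
  have hpos : 0 < m * g c + (1 + Real.log c) := by
    rw [hlogc]
    have := mul_pos hm_pos hgc
    linarith
  have ev1 : ∀ᶠ x in nhds c, 0 < m * g x + (1 + Real.log x) :=
    hcont.eventually (eventually_gt_nhds hpos)
  have ev2 : ∀ᶠ x in nhds c, 0 < x := eventually_gt_nhds hc0
  have ev3 : ∀ᶠ x in nhdsWithin c (Set.Iio c),
      (0 < m * g x + (1 + Real.log x) ∧ 0 < x) :=
    (ev1.and ev2).filter_mono nhdsWithin_le_nhds
  obtain ⟨x, ⟨hhx, hx0⟩, hxc⟩ := (ev3.and self_mem_nhdsWithin).exists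
  have hxc : x < c := hxc
  have hx1 : x ≤ 1 := le_of_lt (hxc.trans hc1)
  refine ⟨x, hx0.le, hxc, ?_⟩
  set K2 : ℝ := 1 + Real.log x with hK2_def
  have hK2 : K2 < 0 := by
    have : Real.log x < Real.log c := Real.log_lt_log hx0 hxc
    rw [hlogc] at this
    rw [hK2_def]
    linarith
  set G : ℕ → ℝ := fun n => ν n * (if n < M then g x else K2) with hG_def
  have hG : Summable G := by
    rw [hG_def]
    exact summable_mul_ite ν hν0 hν1.summable M (g x) K2
  set F : ℕ → ℝ := fun n => (c - x) * G n with hF_def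
  have hcx : 0 < c - x := sub_pos.mpr hxc
  have hsx : Summable (fun n => ν n * pwin (n + 1) x) :=
    summable_nu_pwin hν0 hν1.summable hx0.le hx1
  have hsc : Summable (fun n => ν n * pwin (n + 1) c) :=
    summable_nu_pwin hν0 hν1.summable hc0.le hc1.le
  -- pointwise bound
  have hpt : ∀ n, F n ≤ ν n * pwin (n + 1) x - ν n * pwin (n + 1) c := by
    intro n
    have hA := pwin_diff hx0.le hxc.le hc1.le n
    have hbr : (if n < M then g x else K2) ≤
        1 - ∑ j ∈ Finset.Icc 1 n, (1 - x) ^ j / (j : ℝ) := by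
      split_ifs with h
      · simp only [hg_def]
        have hsub : Finset.Icc 1 n ⊆ Finset.Icc 1 M := Finset.Icc_subset_Icc_right (by omega)
        have hle : ∑ j ∈ Finset.Icc 1 n, (1 - x) ^ j / (j : ℝ) ≤
            ∑ j ∈ Finset.Icc 1 M, (1 - x) ^ j / (j : ℝ) :=
          Finset.sum_le_sum_of_subset_of_nonneg hsub
            (fun j _ _ => by
              have h1x : (0 : ℝ) ≤ 1 - x := by linarith
              positivity)
        linarith
      · rw [hK2_def]
        have := sum_pow_div_le_neg_log hx0 hx1 n
        linarith
    have h2 : (c - x) * (if n < M then g x else K2) ≤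
        (c - x) * (1 - ∑ j ∈ Finset.Icc 1 n, (1 - x) ^ j / (j : ℝ)) :=
      mul_le_mul_of_nonneg_left hbr hcx.le
    have h3 : (c - x) * (if n < M then g x else K2) ≤ pwin (n + 1) x - pwin (n + 1) c :=
      h2.trans hA
    have h4 := mul_le_mul_of_nonneg_left h3 (hν0 n)
    rw [hF_def, hG_def]
    simp only
    calc (c - x) * (ν n * (if n < M then g x else K2))
        = ν n * ((c - x) * (if n < M then g x else K2)) := by ring
      _ ≤ ν n * (pwin (n + 1) x - pwin (n + 1) c) := h4
      _ = ν n * pwin (n + 1) x - ν n * pwin (n + 1) c := by ring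
  have hF : Summable F := hG.mul_left _
  have htsum_le : (∑' n, F n) ≤
      (∑' n, ν n * pwin (n + 1) x) - ∑' n, ν n * pwin (n + 1) c := by
    have := Summable.tsum_le_tsum hpt hF (hsx.sub hsc)
    rwa [Summable.tsum_sub hsx hsc] at this
  -- compute tsum F
  have hGval : (∑' n, G n) = m * g x + (1 - m) * K2 := by
    simp only [hG_def, hm_def]
    exact tsum_mul_ite ν hν0 hν1 M (g x) K2
  have hGpos : 0 < ∑' n, G n := by
    rw [hGval]
    have h1 : K2 ≤ (1 - m) * K2 := by nlinarith
    have h2 : 0 < m * g x + K2 := by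
      have := hhx
      rw [hK2_def]
      linarith
    linarith
  have hFval : (∑' n, F n) = (c - x) * ∑' n, G n := by
    rw [hF_def, tsum_mul_left]
  have hFpos : 0 < ∑' n, F n := by
    rw [hFval]
    exact mul_pos hcx hGpos
  linarith
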